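/- If the symmetric bilinear form B on V is nondegenerate, then the loop-space form Ω restricts to a perfect pairing between K₋ and K₊: (i) if f ∈ K₋ satisfies Ω(f, g) = 0 for all g ∈ K₊, then f = 0; and (ii) if g ∈ K₊ satisfies Ω(f, g) = 0 for all f ∈ K₋, then g = 0. (This identifies K with the cotangent bundle T*K₊ with K₋ playing the role of the fibers.) -/

import Mathlib

open Polynomial in
theorem algebraMap_ratFunc_eq_aeval (F : Type*) [Field F] (p : F[X]) :
    algebraMap F[X] (RatFunc F) p = Polynomial.aeval RatFunc.X p := by
  have h : (IsScalarTower.toAlgHom F F[X] (RatFunc F)) = Polynomial.aeval (RatFunc.X (K := F)) :=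
    Polynomial.algHom_ext (by simp [RatFunc.algebraMap_X])
  exact DFunLike.congr_fun h p

open Polynomial in
/-- Injectivity of `aeval X⁻¹ : F[X] → F(q)`. -/
theorem aeval_inv_injective (F : Type*) [Field F] :
    Function.Injective (Polynomial.aeval (RatFunc.X (K := F))⁻¹ : F[X] →ₐ[F] RatFunc F) := by
  rw [injective_iff_map_eq_zero]
  intro p hp
  haveI : Invertible (RatFunc.X (K := F))⁻¹ :=
    invertibleOfNonzero (inv_ne_zero RatFunc.X_ne_zero)
  have h2 : (⅟(RatFunc.X (K := F))⁻¹) = RatFunc.X := by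
    rw [invOf_eq_inv, inv_inv]
  have hp' : Polynomial.eval₂ (algebraMap F (RatFunc F)) (RatFunc.X)⁻¹ p = 0 := by
    rwa [Polynomial.aeval_def] at hp
  rw [← Polynomial.eval₂_reverse_eq_zero_iff (algebraMap F (RatFunc F)) (RatFunc.X)⁻¹ p] at hp'
  rw [h2] at hp'
  have h3 : algebraMap F[X] (RatFunc F) p.reverse = 0 := by
    rw [algebraMap_ratFunc_eq_aeval, Polynomial.aeval_def]
    exact hp'
  have h4 : p.reverse = 0 := RatFunc.algebraMap_injective F (by simpa using h3)
  exact Polynomial.reverse_eq_zero.mp h4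

noncomputable section

open scoped TensorProduct

variable (F : Type*) [Field F]

/-- The automorphism `q ↦ q⁻¹` of `F(q)`: the unique `F`-algebra map sending `q` to `q⁻¹`. -/
def qinv : RatFunc F →ₐ[F] RatFunc F :=
  IsFractionRing.liftAlgHom (aeval_inv_injective F)

/-- Coefficient of `qⁿ` in the Laurent-series expansion at `q = 0`, as an `F`-linear map. -/
def coeffL (n : ℤ) : RatFunc F →ₗ[F] F where
  toFun h := ((h : LaurentSeries F)).coeff n
  map_add' a b := by
    rw [map_add, HahnSeries.coeff_add]
  map_smul' c a := by
    rw [RatFunc.smul_eq_C_mul, map_mul, ← RatFunc.algebraMap_eq_C,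
      IsScalarTower.algebraMap_apply F (Polynomial F) (RatFunc F),
      ← IsScalarTower.algebraMap_apply]
    simp

/-- `Res_{q=0} (h dq)`: the coefficient of `q⁻¹` in the Laurent expansion of `h` at `q = 0`. -/
def res0 (h : RatFunc F) : F := coeffL F (-1) h

/-- `Res_{q=∞} (h dq) := −Res_{q=0} (q⁻² h(q⁻¹) dq)`. -/
def resInf (h : RatFunc F) : F := - res0 F ((RatFunc.X)⁻¹ ^ 2 * qinv F h)

variable (V : Type*) [AddCommGroup V] [Module F V]

/-- The loop space `K := F(q) ⊗_F V` of `V`-valued rational functions. -/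
abbrev LoopK := RatFunc F ⊗[F] V

/-- `f(q) ↦ f(q⁻¹)` on `K`. -/
def finv : LoopK F V →ₗ[F] LoopK F V := LinearMap.rTensor V (qinv F).toLinearMap

/-- The `V`-valued coefficient of `qⁿ` in the expansion at `q = 0` of an element of `K`. -/
def vcoeff (n : ℤ) : LoopK F V →ₗ[F] V :=
  (TensorProduct.lid F V).toLinearMap ∘ₗ LinearMap.rTensor V (coeffL F n)

/-- The loop-space form
`Ω(f,g) = −Res_{q=0}(q⁻¹ B_q(f(q⁻¹),g(q)) dq) − Res_{q=∞}(q⁻¹ B_q(f(q⁻¹),g(q)) dq)`. -/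
def Omega (B : LinearMap.BilinForm F V) (f g : LoopK F V) : F :=
  - res0 F ((RatFunc.X)⁻¹ * (LinearMap.BilinForm.baseChange (RatFunc F) B) (finv F V f) g)
  - resInf F ((RatFunc.X)⁻¹ * (LinearMap.BilinForm.baseChange (RatFunc F) B) (finv F V f) g)

/-- `K₊`: `V`-valued Laurent polynomials in `q`. -/
def Kplus : Submodule F (LoopK F V) :=
  Submodule.span F {z : LoopK F V | ∃ (n : ℤ) (v : V), z = (RatFunc.X ^ n) ⊗ₜ[F] v}

/-- `K₋`: `V`-valued rational functions regular at `q = 0` and vanishing at `q = ∞`. -/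
def Kminus : Submodule F (LoopK F V) where
  carrier := {f | (∀ n : ℤ, n < 0 → vcoeff F V n f = 0) ∧
    (∀ n : ℤ, n ≤ 0 → vcoeff F V n (finv F V f) = 0)}
  add_mem' := by
    rintro a b ⟨ha1, ha2⟩ ⟨hb1, hb2⟩
    constructor
    · intro n hn; rw [map_add, ha1 n hn, hb1 n hn, add_zero]
    · intro n hn; rw [map_add, map_add, ha2 n hn, hb2 n hn, add_zero]
  zero_mem' := by
    constructor <;> intro n hn <;> simp
  smul_mem' := by
    rintro c a ⟨ha1, ha2⟩
    constructor
    · intro n hn; rw [map_smul, ha1 n hn, smul_zero]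
    · intro n hn; rw [map_smul, map_smul, ha2 n hn, smul_zero]

/-- The value at `q = 1` of a `V`-valued Laurent polynomial (the sum of its coefficients). -/
def evalOne (f : LoopK F V) : V := ∑ᶠ n : ℤ, vcoeff F V n f

/-- Scalar `K₊ ⊂ F(q)`: the Laurent polynomials. -/
def KplusS : Submodule F (RatFunc F) :=
  Submodule.span F (Set.range fun n : ℤ => (RatFunc.X : RatFunc F) ^ n)

/-- Scalar `K₋ ⊂ F(q)`: rational functions regular at `q = 0` and vanishing at `q = ∞`. -/
def KminusS : Submodule F (RatFunc F) where
  carrier := {h | (∀ n : ℤ, n < 0 → coeffL F n h = 0) ∧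
    (∀ n : ℤ, n ≤ 0 → coeffL F n (qinv F h) = 0)}
  add_mem' := by
    rintro a b ⟨ha1, ha2⟩ ⟨hb1, hb2⟩
    constructor
    · intro n hn; rw [map_add, ha1 n hn, hb1 n hn, add_zero]
    · intro n hn; rw [map_add, map_add, ha2 n hn, hb2 n hn, add_zero]
  zero_mem' := by
    constructor <;> intro n hn <;> simp
  smul_mem' := by
    rintro c a ⟨ha1, ha2⟩
    constructor
    · intro n hn; rw [map_smul, ha1 n hn, smul_zero]
    · intro n hn; rw [map_smul, map_smul, ha2 n hn, smul_zero]


/-! ### Auxiliary: the geometric series `1/(1-X^N)` -/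

/-- The power series `∑ₖ X^{kN}`. -/
def geomPS (N : ℕ) : PowerSeries F :=
  PowerSeries.mk fun k => if N ∣ k then 1 else 0

theorem geomPS_spec (N : ℕ) (hN : 0 < N) :
    (1 - (PowerSeries.X) ^ N) * geomPS F N = 1 := by
  ext k
  rw [sub_mul, one_mul, map_sub]
  rcases eq_or_ne k 0 with rfl | hk
  · simp [geomPS, hN.ne', PowerSeries.coeff_X_pow_mul']
  · rw [PowerSeries.coeff_X_pow_mul']
    simp only [geomPS, PowerSeries.coeff_mk, PowerSeries.coeff_one, hk, if_false]
    by_cases h : N ≤ k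
    · have hiff : N ∣ k ↔ N ∣ (k - N) := by
        constructor
        · intro hd; exact Nat.dvd_sub hd dvd_rfl
        · intro hd
          have := Nat.dvd_add hd (dvd_refl N)
          rwa [Nat.sub_add_cancel h] at this
      by_cases hd : N ∣ k
      · simp [hd, hiff.mp hd, h]
      · simp [hd, hiff.not.mp hd, h]
    · have : ¬ N ∣ k := fun hd => h (Nat.le_of_dvd (Nat.pos_of_ne_zero hk) hd)
      simp [h, this]

theorem coe_zpow' (j : ℤ) :
    (((RatFunc.X : RatFunc F) ^ j : RatFunc F) : LaurentSeries F) = HahnSeries.single j 1 := by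
  rw [map_zpow₀, RatFunc.coe_X, ← RatFunc.single_zpow]

theorem coe_geomRat (N : ℕ) (hN : 0 < N) :
    (((1 - RatFunc.X ^ N)⁻¹ : RatFunc F) : LaurentSeries F) = (geomPS F N : LaurentSeries F) := by
  have h1 : ((1 - RatFunc.X ^ N : RatFunc F) : LaurentSeries F)
      = ((1 - PowerSeries.X ^ N : PowerSeries F) : LaurentSeries F) := by
    rw [map_sub, map_one, map_pow, RatFunc.coe_X,
      PowerSeries.coe_sub, PowerSeries.coe_one, PowerSeries.coe_pow, PowerSeries.coe_X]
  rw [map_inv₀, h1]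
  refine inv_eq_of_mul_eq_one_right ?_
  rw [← PowerSeries.coe_mul, geomPS_spec F N hN, PowerSeries.coe_one]

theorem coeff_XzpowGeom (N : ℕ) (hN : 0 < N) (j n : ℤ) :
    ((RatFunc.X ^ j * (1 - RatFunc.X ^ N)⁻¹ : RatFunc F) : LaurentSeries F).coeff n
      = if j ≤ n ∧ (N:ℤ) ∣ (n - j) then 1 else 0 := by
  rw [map_mul, coe_zpow' F j, coe_geomRat F N hN]
  have h2 : ((HahnSeries.single j 1 : LaurentSeries F) * ((geomPS F N : PowerSeries F) : LaurentSeries F)).coeff n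
      = (((geomPS F N : PowerSeries F) : LaurentSeries F)).coeff (n - j) := by
    have hnj : n = (n - j) + j := by ring
    conv_lhs => rw [hnj]
    rw [HahnSeries.coeff_single_mul_add, one_mul]
  rw [h2, PowerSeries.coeff_coe]
  rcases lt_or_ge (n - j) 0 with h | h
  · rw [if_pos h, if_neg]; rintro ⟨h1, -⟩; omega
  · rw [if_neg (not_lt.mpr h)]
    simp only [geomPS, PowerSeries.coeff_mk]
    have hd : (N:ℤ) ∣ (n - j) ↔ N ∣ (n - j).natAbs := by
      rw [Int.natCast_dvd_natCast.symm, Int.natAbs_of_nonneg h]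
    by_cases hdd : (N:ℤ) ∣ (n - j)
    · rw [if_pos (hd.mp hdd), if_pos ⟨by omega, hdd⟩]
    · rw [if_neg (fun hh => hdd (hd.mpr hh)), if_neg (by tauto)]

/-! ### Properties of `qinv` -/

open Polynomial in
theorem qinv_algebraMap' (p : F[X]) :
    qinv F (algebraMap F[X] (RatFunc F) p) = Polynomial.aeval (RatFunc.X (K := F))⁻¹ p := by
  simp only [qinv, IsFractionRing.liftAlgHom_apply]
  exact IsFractionRing.lift_algebraMap _ _

theorem qinv_X : qinv F RatFunc.X = (RatFunc.X (K := F))⁻¹ := by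
  have := qinv_algebraMap' F Polynomial.X
  simpa [RatFunc.algebraMap_X] using this

theorem qinv_qinv (h : RatFunc F) : qinv F (qinv F h) = h := by
  have key : ((qinv F).toRingHom.comp (qinv F).toRingHom) = RingHom.id (RatFunc F) := by
    apply IsLocalization.ringHom_ext (nonZeroDivisors (Polynomial F))
    refine RingHom.ext fun p => ?_
    simp only [RingHom.comp_apply, RingHom.coe_coe, AlgHom.coe_toRingHom, RingHom.id_apply,
      RingHom.coe_comp, Function.comp_apply]
    show qinv F (qinv F ((algebraMap (Polynomial F) (RatFunc F)) p))
      = (algebraMap (Polynomial F) (RatFunc F)) p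
    rw [qinv_algebraMap', ← Polynomial.aeval_algHom_apply, map_inv₀, qinv_X, inv_inv,
      ← algebraMap_ratFunc_eq_aeval]
  exact DFunLike.congr_fun key h

theorem qinv_zpow (m : ℤ) : qinv F (RatFunc.X ^ m) = RatFunc.X (K := F) ^ (-m) := by
  rw [map_zpow₀, qinv_X, inv_zpow, ← zpow_neg]

/-! ### Coefficient computations -/

theorem coeffL_apply (n : ℤ) (h : RatFunc F) :
    coeffL F n h = (h : LaurentSeries F).coeff n := rfl

theorem coeffL_zpow (n m : ℤ) :
    coeffL F n ((RatFunc.X : RatFunc F) ^ m) = if n = m then 1 else 0 := by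
  rw [coeffL_apply, coe_zpow', HahnSeries.coeff_single]
  simp

theorem coeffL_zpow_mul (k n : ℤ) (h : RatFunc F) :
    coeffL F n ((RatFunc.X : RatFunc F) ^ k * h) = coeffL F (n - k) h := by
  rw [coeffL_apply, map_mul, coe_zpow', coeffL_apply]
  have h2 : ((HahnSeries.single k 1 : LaurentSeries F) * (h : LaurentSeries F)).coeff n
      = (h : LaurentSeries F).coeff (n - k) := by
    have hnk : n = (n - k) + k := by ring
    conv_lhs => rw [hnk]
    rw [HahnSeries.coeff_single_mul_add, one_mul]
  rw [h2]

theorem res0_smul (c : F) (h : RatFunc F) : res0 F (c • h) = c * res0 F h := by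
  rw [res0, map_smul, smul_eq_mul, res0]

theorem resInf_smul (c : F) (h : RatFunc F) : resInf F (c • h) = c * resInf F h := by
  rw [resInf, map_smul, mul_smul_comm, res0_smul, resInf]
  ring

theorem res0_Xinv_mul (h : RatFunc F) :
    res0 F ((RatFunc.X (K := F))⁻¹ * h) = coeffL F 0 h := by
  rw [res0, show ((RatFunc.X (K := F))⁻¹ * h) = (RatFunc.X (K := F)) ^ (-1 : ℤ) * h by
    rw [zpow_neg_one], coeffL_zpow_mul]
  norm_num

theorem resInf_Xinv_mul (h : RatFunc F) :
    resInf F ((RatFunc.X (K := F))⁻¹ * h) = - coeffL F 0 (qinv F h) := by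
  have hX : (RatFunc.X : RatFunc F) ≠ 0 := RatFunc.X_ne_zero
  rw [resInf, map_mul, map_inv₀, qinv_X, inv_inv]
  have h2 : ((RatFunc.X (K := F))⁻¹ ^ 2 * (RatFunc.X * qinv F h))
      = (RatFunc.X (K := F))⁻¹ * qinv F h := by
    field_simp
  rw [h2, res0_Xinv_mul]

/-- The `F`-linear map `h ↦ -Res₀(q⁻¹ h) - Res_∞(q⁻¹ h)`. -/
def totalL : RatFunc F →ₗ[F] F :=
  (-(coeffL F (-1)) + ((coeffL F (-1)) ∘ₗ
      (LinearMap.mulLeft F ((RatFunc.X (K := F))⁻¹ ^ 2)) ∘ₗ (qinv F).toLinearMap)) ∘ₗ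
    LinearMap.mulLeft F (RatFunc.X (K := F))⁻¹

theorem totalL_apply (h : RatFunc F) :
    totalL F h = - res0 F ((RatFunc.X)⁻¹ * h) - resInf F ((RatFunc.X)⁻¹ * h) := by
  simp only [totalL, LinearMap.coe_comp, Function.comp_apply, LinearMap.mulLeft_apply,
    LinearMap.add_apply, LinearMap.neg_apply, res0, resInf, AlgHom.toLinearMap_apply]
  ring

/-! ### The pairing as a linear map in each variable -/

/-- `Ω(f, ·)` as an `F`-linear map. -/
def pairR (B : LinearMap.BilinForm F V) (f : LoopK F V) : LoopK F V →ₗ[F] F :=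
  totalL F ∘ₗ (((LinearMap.BilinForm.baseChange (RatFunc F) B) (finv F V f)).restrictScalars F)

/-- `Ω(·, g)` as an `F`-linear map. -/
def pairLf (B : LinearMap.BilinForm F V) (g : LoopK F V) : LoopK F V →ₗ[F] F :=
  totalL F ∘ₗ (((LinearMap.BilinForm.baseChange (RatFunc F) B).flip g).restrictScalars F) ∘ₗ
    finv F V

theorem Omega_eq_pairR (B : LinearMap.BilinForm F V) (f g : LoopK F V) :
    Omega F V B f g = pairR F V B f g := by
  simp only [pairR, LinearMap.coe_comp, Function.comp_apply, LinearMap.restrictScalars_apply,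
    totalL_apply, Omega]

theorem Omega_eq_pairLf (B : LinearMap.BilinForm F V) (f g : LoopK F V) :
    Omega F V B f g = pairLf F V B g f := by
  simp only [pairLf, LinearMap.coe_comp, Function.comp_apply, LinearMap.restrictScalars_apply,
    LinearMap.flip_apply, totalL_apply, Omega]
  rfl

theorem finv_tmul (a : RatFunc F) (v : V) :
    finv F V (a ⊗ₜ[F] v) = qinv F a ⊗ₜ[F] v := by
  simp [finv]

theorem vcoeff_tmul (n : ℤ) (a : RatFunc F) (v : V) :
    vcoeff F V n (a ⊗ₜ[F] v) = coeffL F n a • v := by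
  simp [vcoeff]

theorem Omega_tmul (B : LinearMap.BilinForm F V) (a b : RatFunc F) (v w : V) :
    Omega F V B (a ⊗ₜ[F] v) (b ⊗ₜ[F] w)
      = (coeffL F 0 (a * qinv F b) - coeffL F 0 (qinv F a * b)) * B v w := by
  rw [Omega, finv_tmul, LinearMap.BilinForm.baseChange_tmul, mul_smul_comm, res0_smul,
    resInf_smul, res0_Xinv_mul, resInf_Xinv_mul, map_mul (qinv F), qinv_qinv]
  ring

theorem Omega_tmul_monomial (B : LinearMap.BilinForm F V) (a : RatFunc F) (v w : V) (m : ℤ) :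
    Omega F V B (a ⊗ₜ[F] v) ((RatFunc.X ^ m) ⊗ₜ[F] w)
      = (coeffL F m a - coeffL F (-m) (qinv F a)) * B v w := by
  rw [Omega_tmul, qinv_zpow]
  have h1 : coeffL F 0 (a * RatFunc.X ^ (-m)) = coeffL F m a := by
    rw [mul_comm, coeffL_zpow_mul]
    norm_num
  have h2 : coeffL F 0 (qinv F a * RatFunc.X ^ m) = coeffL F (-m) (qinv F a) := by
    rw [mul_comm, coeffL_zpow_mul]
    norm_num
  rw [h1, h2]

theorem Omega_monomial (B : LinearMap.BilinForm F V) (m : ℤ) (w : V) (f : LoopK F V) :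
    Omega F V B f ((RatFunc.X ^ m) ⊗ₜ[F] w)
      = B (vcoeff F V m f - vcoeff F V (-m) (finv F V f)) w := by
  induction f using TensorProduct.induction_on with
  | zero => rw [Omega_eq_pairLf]; simp
  | tmul a v =>
      rw [Omega_tmul_monomial, finv_tmul, vcoeff_tmul, vcoeff_tmul]
      simp only [map_sub, map_smul, LinearMap.sub_apply, LinearMap.smul_apply, smul_eq_mul]
      ring
  | add x y hx hy =>
      rw [Omega_eq_pairLf, map_add, ← Omega_eq_pairLf, ← Omega_eq_pairLf, hx, hy]
      have hre : vcoeff F V m (x + y) - vcoeff F V (-m) (finv F V (x + y))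
          = (vcoeff F V m x - vcoeff F V (-m) (finv F V x))
            + (vcoeff F V m y - vcoeff F V (-m) (finv F V y)) := by
        simp only [map_add]
        abel
      rw [hre, map_add, LinearMap.add_apply]

/-! ### Injectivity of the family of coefficient maps -/

theorem eq_zero_of_vcoeff_eq_zero [FiniteDimensional F V] (f : LoopK F V)
    (h : ∀ n : ℤ, vcoeff F V n f = 0) : f = 0 := by
  classical
  set b := Module.finBasis F V with hb
  set bb := Algebra.TensorProduct.basis (RatFunc F) b with hbb
  have hrep : ∀ x : LoopK F V, x = ∑ i, bb.repr x i • bb i := fun x => (bb.sum_repr x).symm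
  have hv : ∀ n : ℤ, vcoeff F V n f = ∑ i, coeffL F n (bb.repr f i) • b i := by
    intro n
    conv_lhs => rw [hrep f]
    rw [map_sum]
    refine Finset.sum_congr rfl fun i _ => ?_
    rw [hbb, Algebra.TensorProduct.basis_repr_symm_apply' b (bb.repr f i) i, vcoeff_tmul]
  have hci : ∀ i, bb.repr f i = 0 := by
    intro i
    have hall : ∀ n : ℤ, coeffL F n (bb.repr f i) = 0 := by
      intro n
      have h0 : ∑ j, coeffL F n (bb.repr f j) • b j = 0 := (hv n).symm.trans (h n)
      exact Fintype.linearIndependent_iff.mp b.linearIndependent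
        (fun j => coeffL F n (bb.repr f j)) h0 i
    refine RingHom.injective _ (?_ : ((bb.repr f i : RatFunc F) : LaurentSeries F) = ((0 : RatFunc F) : LaurentSeries F))
    rw [map_zero]
    apply HahnSeries.coeff_injective
    funext n
    simpa [coeffL_apply] using hall n
  rw [hrep f]
  simp [hci]

/-! ### Laurent polynomial representation of elements of `K₊` -/

theorem rep_vanish (g : LoopK F V) (S : Finset ℤ)
    (hS : g = ∑ m ∈ S, (RatFunc.X ^ m) ⊗ₜ[F] vcoeff F V m g)
    (k : ℤ) (hk : k ∉ S) : vcoeff F V k g = 0 := by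
  conv_lhs => rw [hS]
  rw [map_sum]
  refine Finset.sum_eq_zero fun m hm => ?_
  rw [vcoeff_tmul, coeffL_zpow, if_neg (by rintro rfl; exact hk hm), zero_smul]

theorem rep_superset (g : LoopK F V) (S T : Finset ℤ)
    (hS : g = ∑ m ∈ S, (RatFunc.X ^ m) ⊗ₜ[F] vcoeff F V m g) (hST : S ⊆ T) :
    g = ∑ m ∈ T, (RatFunc.X ^ m) ⊗ₜ[F] vcoeff F V m g := by
  conv_lhs => rw [hS]
  refine Finset.sum_subset hST fun m _ hmS => ?_
  rw [rep_vanish F V g S hS m hmS, TensorProduct.tmul_zero]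

theorem Kplus_rep (g : LoopK F V) (hg : g ∈ Kplus F V) :
    ∃ S : Finset ℤ, g = ∑ m ∈ S, (RatFunc.X ^ m) ⊗ₜ[F] vcoeff F V m g := by
  classical
  refine Submodule.span_induction ?_ ?_ ?_ ?_ hg
  · rintro z ⟨n, v, rfl⟩
    refine ⟨{n}, ?_⟩
    rw [Finset.sum_singleton, vcoeff_tmul, coeffL_zpow, if_pos rfl, one_smul]
  · exact ⟨∅, by simp⟩
  · rintro x y hx hy ⟨Sx, hSx⟩ ⟨Sy, hSy⟩
    refine ⟨Sx ∪ Sy, ?_⟩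
    have hx' := rep_superset F V x Sx (Sx ∪ Sy) hSx Finset.subset_union_left
    have hy' := rep_superset F V y Sy (Sx ∪ Sy) hSy Finset.subset_union_right
    calc x + y = (∑ m ∈ Sx ∪ Sy, (RatFunc.X ^ m) ⊗ₜ[F] vcoeff F V m x)
        + ∑ m ∈ Sx ∪ Sy, (RatFunc.X ^ m) ⊗ₜ[F] vcoeff F V m y := by rw [← hx', ← hy']
      _ = ∑ m ∈ Sx ∪ Sy, (RatFunc.X ^ m) ⊗ₜ[F] vcoeff F V m (x + y) := by
          rw [← Finset.sum_add_distrib]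
          exact Finset.sum_congr rfl fun m _ => by rw [map_add, TensorProduct.tmul_add]
  · rintro c x hx ⟨S, hS⟩
    refine ⟨S, ?_⟩
    conv_lhs => rw [hS]
    rw [Finset.smul_sum]
    exact Finset.sum_congr rfl fun m _ => by rw [map_smul, TensorProduct.tmul_smul]

/-! ### The detecting family `X^j / (1 - X^N)` in `K₋` -/

/-- The rational function `X^j / (1 - X^N)`. -/
def aJN (j : ℤ) (N : ℕ) : RatFunc F := RatFunc.X ^ j * (1 - RatFunc.X ^ N)⁻¹

theorem coeffL_aJN (N : ℕ) (hN : 0 < N) (j n : ℤ) :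
    coeffL F n (aJN F j N) = if j ≤ n ∧ (N:ℤ) ∣ (n - j) then 1 else 0 := by
  rw [coeffL_apply, aJN, coeff_XzpowGeom F N hN]

theorem one_sub_X_pow_ne_zero (N : ℕ) (hN : 0 < N) :
    (1 - RatFunc.X ^ N : RatFunc F) ≠ 0 := by
  intro h0
  have hX : ((RatFunc.X : RatFunc F) ^ N : RatFunc F) = 1 := by
    have := sub_eq_zero.mp h0
    exact this.symm
  have hco : ((RatFunc.X ^ N : RatFunc F) : LaurentSeries F).coeff 0
      = ((1 : RatFunc F) : LaurentSeries F).coeff 0 := by rw [hX]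
  rw [map_one, map_pow, RatFunc.coe_X, ← RatFunc.single_one_eq_pow] at hco
  rw [HahnSeries.coeff_single, if_neg (show (0:ℤ) ≠ (N:ℤ) by exact_mod_cast hN.ne)] at hco
  simp at hco

theorem qinv_aJN (N : ℕ) (hN : 0 < N) (j : ℤ) :
    qinv F (aJN F j N) = - aJN F ((N:ℤ) - j) N := by
  have hX : (RatFunc.X : RatFunc F) ≠ 0 := RatFunc.X_ne_zero
  have hG : (1 - RatFunc.X ^ N : RatFunc F) ≠ 0 := one_sub_X_pow_ne_zero F N hN
  rw [aJN, map_mul, map_inv₀, map_sub, map_one, map_pow, qinv_zpow, qinv_X]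
  have key : (1 - ((RatFunc.X (K := F))⁻¹) ^ N)
      = - (RatFunc.X (K := F)) ^ (-(N:ℤ)) * (1 - RatFunc.X ^ N) := by
    rw [inv_pow, zpow_neg, zpow_natCast]
    field_simp
    ring
  rw [key, aJN, neg_mul, inv_neg, mul_inv, ← zpow_neg, neg_neg, mul_neg,
    show ((N:ℤ) - j) = -j + (N:ℤ) by ring, zpow_add₀ hX]
  ring

theorem coeff_pair_aJN (N : ℕ) (hN : 0 < N) (j m : ℤ) (hj0 : 0 ≤ j) (hjN : j < (N:ℤ)) :
    coeffL F m (aJN F j N) - coeffL F (-m) (qinv F (aJN F j N))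
      = if (N:ℤ) ∣ (m - j) then 1 else 0 := by
  rw [qinv_aJN F N hN, map_neg, coeffL_aJN F N hN, coeffL_aJN F N hN]
  have hN1 : (1:ℤ) ≤ (N:ℤ) := by exact_mod_cast hN
  have hdvd : ((N:ℤ) ∣ (-m - ((N:ℤ) - j))) ↔ ((N:ℤ) ∣ (m - j)) := by
    constructor
    · rintro ⟨k, hk⟩
      refine ⟨-k - 1, ?_⟩
      have : m - j = -(-m - ((N:ℤ) - j)) - (N:ℤ) := by ring
      rw [this, hk]
      ring
    · rintro ⟨k, hk⟩
      refine ⟨-k - 1, ?_⟩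
      have : -m - ((N:ℤ) - j) = -(m - j) - (N:ℤ) := by ring
      rw [this, hk]
      ring
  by_cases hd : (N:ℤ) ∣ (m - j)
  · obtain ⟨k, hk⟩ := hd
    rcases le_or_gt 0 k with hk0 | hk0
    · have hNk : 0 ≤ (N:ℤ) * k := mul_nonneg (by positivity) hk0
      have h1 : j ≤ m := by linarith
      have h2 : ¬ ((N:ℤ) - j ≤ -m) := by
        intro hc
        nlinarith
      simp only [if_pos (show j ≤ m ∧ (N:ℤ) ∣ (m - j) from ⟨h1, ⟨k, hk⟩⟩),
        if_neg (fun hc : ((N:ℤ) - j ≤ -m ∧ (N:ℤ) ∣ (-m - ((N:ℤ) - j))) => h2 hc.1),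
        if_pos (show (N:ℤ) ∣ (m - j) from ⟨k, hk⟩)]
      ring
    · have hk1 : k ≤ -1 := by omega
      have hNk : (N:ℤ) * k ≤ (N:ℤ) * (-1) :=
        mul_le_mul_of_nonneg_left hk1 (by positivity)
      have h2 : ((N:ℤ) - j ≤ -m) := by linarith
      have h1 : ¬ (j ≤ m) := by intro hc; linarith
      simp only [if_neg (fun hc : (j ≤ m ∧ (N:ℤ) ∣ (m - j)) => h1 hc.1),
        if_pos (show ((N:ℤ) - j ≤ -m ∧ (N:ℤ) ∣ (-m - ((N:ℤ) - j))) from ⟨h2, hdvd.mpr ⟨k, hk⟩⟩),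
        if_pos (show (N:ℤ) ∣ (m - j) from ⟨k, hk⟩)]
      ring
  · have hd2 : ¬ ((N:ℤ) ∣ (-m - ((N:ℤ) - j))) := fun hh => hd (hdvd.mp hh)
    simp only [if_neg hd, if_neg (fun hc : (j ≤ m ∧ (N:ℤ) ∣ (m - j)) => hd hc.2),
      if_neg (fun hc : ((N:ℤ) - j ≤ -m ∧ (N:ℤ) ∣ (-m - ((N:ℤ) - j))) => hd2 hc.2)]
    ring

theorem aJN_mem_Kminus (N : ℕ) (hN : 0 < N) (j : ℤ) (hj0 : 0 ≤ j) (hjN : j < (N:ℤ)) (v : V) :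
    (aJN F j N) ⊗ₜ[F] v ∈ Kminus F V := by
  refine ⟨fun n hn => ?_, fun n hn => ?_⟩
  · rw [vcoeff_tmul, coeffL_aJN F N hN, if_neg (fun hc => by omega), zero_smul]
  · rw [finv_tmul, vcoeff_tmul, qinv_aJN F N hN, map_neg, coeffL_aJN F N hN,
      if_neg (fun hc => by omega), neg_zero, zero_smul]

/-- if `B` is nondegenerate then `Ω` is a perfect pairing between `K₋` and `K₊`. -/
theorem Omega_perfect_pairing [FiniteDimensional F V] (B : LinearMap.BilinForm F V)
    (hB : ∀ u v : V, B u v = B v u)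
    (hnd : ∀ v : V, (∀ w : V, B v w = 0) → v = 0) :
    (∀ f ∈ Kminus F V, (∀ g ∈ Kplus F V, Omega F V B f g = 0) → f = 0) ∧
    (∀ g ∈ Kplus F V, (∀ f ∈ Kminus F V, Omega F V B f g = 0) → g = 0) := by
  constructor
  · intro f hf hpair
    obtain ⟨hf1, hf2⟩ := hf
    refine eq_zero_of_vcoeff_eq_zero F V f fun n => ?_
    rcases lt_or_ge n 0 with hn | hn
    · exact hf1 n hn
    · refine hnd _ fun w => ?_
      have hmem : (RatFunc.X ^ n) ⊗ₜ[F] w ∈ Kplus F V :=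
        Submodule.subset_span ⟨n, w, rfl⟩
      have h0 := hpair _ hmem
      rw [Omega_monomial, hf2 (-n) (by omega), sub_zero] at h0
      exact h0
  · intro g hg hpair
    obtain ⟨S, hS⟩ := Kplus_rep F V g hg
    refine eq_zero_of_vcoeff_eq_zero F V g fun n => ?_
    by_cases hnS : n ∈ S
    · classical
      set N : ℕ := 1 + S.sup (fun m => (m - n).natAbs) with hNdef
      have hNpos : 0 < N := by positivity
      have hNZ : (0:ℤ) < (N:ℤ) := by exact_mod_cast hNpos
      have hbound : ∀ m ∈ S, (m - n).natAbs < N := by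
        intro m hm
        have hle : (m - n).natAbs ≤ S.sup (fun m => (m - n).natAbs) :=
          Finset.le_sup (f := fun m => (m - n).natAbs) hm
        omega
      set j : ℤ := n % (N:ℤ) with hjdef
      have hj0 : 0 ≤ j := Int.emod_nonneg n (by omega)
      have hjN : j < (N:ℤ) := Int.emod_lt_of_pos n hNZ
      have hdj : (N:ℤ) ∣ (n - j) := by
        refine ⟨n / (N:ℤ), ?_⟩
        have := Int.mul_ediv_add_emod n (N:ℤ)
        rw [hjdef]
        linarith
      have hv : ∀ v : V, B v (vcoeff F V n g) = 0 := by
        intro v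
        have hmem := aJN_mem_Kminus F V N hNpos j hj0 hjN v
        have h0 := hpair _ hmem
        rw [hS, Omega_eq_pairR, map_sum] at h0
        have hterm : ∀ m ∈ S,
            pairR F V B ((aJN F j N) ⊗ₜ[F] v) ((RatFunc.X ^ m) ⊗ₜ[F] vcoeff F V m g)
              = (if (N:ℤ) ∣ (m - j) then (1:F) else 0) * B v (vcoeff F V m g) := by
          intro m _
          rw [← Omega_eq_pairR, Omega_tmul_monomial, coeff_pair_aJN F N hNpos j m hj0 hjN]
        rw [Finset.sum_congr rfl hterm] at h0
        rw [Finset.sum_eq_single n ?_ ?_] at h0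
        · rw [if_pos hdj, one_mul] at h0
          exact h0
        · intro m hm hmn
          have hnd2 : ¬ (N:ℤ) ∣ (m - j) := by
            intro hdd
            have h3 : (N:ℤ) ∣ (m - n) := by
              have := dvd_sub hdd hdj
              rwa [show (m - j) - (n - j) = m - n by ring] at this
            have h4 : (m - n).natAbs ≠ 0 := by omega
            have h5 : N ∣ (m - n).natAbs := by
              have := Int.natAbs_dvd_natAbs.mpr h3
              simpa using this
            have h6 := Nat.le_of_dvd (Nat.pos_of_ne_zero h4) h5
            have h7 := hbound m hm
            omega
          rw [if_neg hnd2, zero_mul]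
        · intro hn'
          exact absurd hnS hn'
      refine hnd _ fun w => ?_
      rw [hB (vcoeff F V n g) w]
      exact hv w
    · exact rep_vanish F V g S hS n hnS


end
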